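/- Under the hypotheses of joint connectivity (there exist times t_{j_k} with τ ≤ t_{j_{k+1}} - t_{j_k} ≤ T_c such that Σ_{r=j_k}^{j_{k+1}-1} L_{σ(t_r)} has kernel spanned by 1_N) and collective observability (∩_{i=1}^N ker(𝒪_i) = {0}), the integral ∫_{t*}^{t*+T_o} Uᵀ(L_{σ(t)} ⊗ I_n)U dt satisfies α₁ I_ν ≤ ∫_{t*}^{t*+T_o} Uᵀ(L_{σ(t)} ⊗ I_n)U dt ≤ α₂ I_ν for all t* ≥ 0, with T_o = 2T_c and constants 0 < α₁ ≤ α₂ independent of t*. In other words, the system η̇ = 0, ȳ = (L_{σ(t)}^{1/2} ⊗ I_n)Uη is uniformly completely observable. -/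

import Mathlib

open Matrix Kronecker
open MeasureTheory


/-- The observability matrix `𝒪ᵢ = col(Cᵢ, CᵢA, …, CᵢA^{n-1})`. -/
def obsMat {n m : ℕ} (C : Matrix (Fin m) (Fin n) ℝ) (A : Matrix (Fin n) (Fin n) ℝ) :
    Matrix (Fin n × Fin m) (Fin n) ℝ :=
  Matrix.of fun p j => (C * A ^ (p.1 : ℕ)) p.2 j

/-- The block diagonal matrix `U = blockdiag(U₁, …, U_N)`. -/
def blockDiagU {N n : ℕ} {ν : Fin N → ℕ} (U : ∀ i, Matrix (Fin n) (Fin (ν i)) ℝ) :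
    Matrix (Fin N × Fin n) ((i : Fin N) × Fin (ν i)) ℝ :=
  Matrix.of fun p q => if p.1 = q.1 then U q.1 p.2 q.2 else 0


lemma quad_upper {ι : Type*} [Fintype ι] (M : Matrix ι ι ℝ) (v : ι → ℝ) :
    v ⬝ᵥ M.mulVec v ≤ (∑ q, ∑ r, |M q r|) * ∑ q, v q ^ 2 := by
  have hvs : ∀ q, v q ^ 2 ≤ ∑ q, v q ^ 2 :=
    fun q => Finset.single_le_sum (fun i _ => sq_nonneg (v i)) (Finset.mem_univ q)
  calc v ⬝ᵥ M.mulVec v = ∑ q, ∑ r, v q * (M q r * v r) := by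
        simp [dotProduct, Matrix.mulVec, Finset.mul_sum]
    _ ≤ ∑ q, ∑ r, |M q r| * ∑ i, v i ^ 2 := by
        refine Finset.sum_le_sum fun q _ => Finset.sum_le_sum fun r _ => ?_
        have h1 : v q * (M q r * v r) ≤ |M q r| * (|v q| * |v r|) := by
          calc v q * (M q r * v r) ≤ |v q * (M q r * v r)| := le_abs_self _
            _ = |M q r| * (|v q| * |v r|) := by rw [abs_mul, abs_mul]; ring
        refine h1.trans (mul_le_mul_of_nonneg_left ?_ (abs_nonneg _))
        have h2 : |v q| * |v r| ≤ (v q ^ 2 + v r ^ 2) / 2 := by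
          nlinarith [sq_nonneg (|v q| - |v r|), sq_abs (v q), sq_abs (v r)]
        refine h2.trans ?_
        have := hvs q; have := hvs r
        linarith
    _ = (∑ q, ∑ r, |M q r|) * ∑ q, v q ^ 2 := by rw [Finset.sum_mul]; congr 1; ext q; rw [Finset.sum_mul]

lemma psd_cs {ι : Type*} [Fintype ι] {M : Matrix ι ι ℝ} (hM : M.PosSemidef)
    (a b : ι → ℝ) :
    (a ⬝ᵥ M.mulVec b) ^ 2 ≤ (a ⬝ᵥ M.mulVec a) * (b ⬝ᵥ M.mulVec b) := by
  obtain ⟨B, rfl⟩ : ∃ B : Matrix ι ι ℝ, M = Bᴴ * B := by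
    classical
    open scoped MatrixOrder in
    exact CStarAlgebra.nonneg_iff_eq_star_mul_self.mp hM.nonneg
  have key : ∀ x y : ι → ℝ, x ⬝ᵥ (Bᴴ * B).mulVec y = ∑ i, B.mulVec x i * B.mulVec y i := by
    intro x y
    rw [← Matrix.mulVec_mulVec, Matrix.dotProduct_mulVec]
    have : Bᴴ = Bᵀ := by ext i j; simp [Matrix.conjTranspose_apply]
    rw [this, Matrix.vecMul_transpose]
    rfl
  rw [key, key, key]
  simpa [pow_two] using Finset.sum_mul_sq_le_sq_mul_sq Finset.univ (B.mulVec a) (B.mulVec b)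

lemma posdef_lower {ι : Type*} [Fintype ι] [DecidableEq ι] {M : Matrix ι ι ℝ}
    (hM : M.PosDef) :
    ∃ c : ℝ, 0 < c ∧ ∀ v : ι → ℝ, c * ∑ q, v q ^ 2 ≤ v ⬝ᵥ M.mulVec v := by
  have hKdef : True := trivial
  set K : ℝ := (∑ q, ∑ r, |M⁻¹ q r|) + 1 with hK
  have hKpos : 0 < K := by
    rw [hK]
    have : (0:ℝ) ≤ ∑ q, ∑ r, |M⁻¹ q r| :=
      Finset.sum_nonneg fun q _ => Finset.sum_nonneg fun r _ => abs_nonneg _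
    linarith
  refine ⟨1 / K, by positivity, fun v => ?_⟩
  by_cases hs : ∑ q, v q ^ 2 = 0
  · have hv : v = 0 := by
      funext q
      have : v q ^ 2 = 0 :=
        le_antisymm (hs ▸ Finset.single_le_sum (fun i _ => sq_nonneg (v i)) (Finset.mem_univ q))
          (sq_nonneg _)
      exact pow_eq_zero_iff (two_ne_zero) |>.mp this
    simp [hv, hs]
  · have hspos : 0 < ∑ q, v q ^ 2 :=
      lt_of_le_of_ne (Finset.sum_nonneg fun q _ => sq_nonneg _) (Ne.symm hs)
    set s := ∑ q, v q ^ 2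
    have hMv : M.mulVec (M⁻¹.mulVec v) = v := by
      rw [Matrix.mulVec_mulVec, Matrix.mul_nonsing_inv _ ((Matrix.isUnit_iff_isUnit_det _).mp hM.isUnit), Matrix.one_mulVec]
    have hvv : v ⬝ᵥ v = s := by simp [dotProduct, pow_two, s]
    have hcs := psd_cs hM.posSemidef v (M⁻¹.mulVec v)
    rw [hMv, hvv] at hcs
    have h2 : (M⁻¹.mulVec v) ⬝ᵥ v = v ⬝ᵥ M⁻¹.mulVec v := dotProduct_comm _ _
    rw [h2] at hcs
    have h3 : v ⬝ᵥ M⁻¹.mulVec v ≤ K * s := by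
      have := quad_upper M⁻¹ v
      have hKK : (∑ q, ∑ r, |M⁻¹ q r|) * s ≤ K * s := by
        apply mul_le_mul_of_nonneg_right _ hspos.le
        simp [hK]
      exact this.trans hKK
    have hq : 0 ≤ v ⬝ᵥ M.mulVec v := by
      have := hM.posSemidef.re_dotProduct_nonneg v
      simpa using this
    have h4 : s ^ 2 ≤ (v ⬝ᵥ M.mulVec v) * (K * s) :=
      hcs.trans (mul_le_mul_of_nonneg_left h3 hq)
    rw [div_mul_eq_mul_div, div_le_iff₀ hKpos]
    nlinarith [hspos]

section
variable {N n : ℕ}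

lemma kron_mulVec (L : Matrix (Fin N) (Fin N) ℝ) (x : Fin N × Fin n → ℝ) (i : Fin N) (a : Fin n) :
    ((L ⊗ₖ (1 : Matrix (Fin n) (Fin n) ℝ)).mulVec x) (i, a)
      = L.mulVec (fun j => x (j, a)) i := by
  simp only [Matrix.mulVec, dotProduct, Fintype.sum_prod_type,
    Matrix.kroneckerMap_apply, Matrix.one_apply]
  rw [Finset.sum_comm]
  simp [Finset.sum_ite_eq, mul_ite, ite_mul, mul_comm]

lemma kron_quad (L : Matrix (Fin N) (Fin N) ℝ) (x : Fin N × Fin n → ℝ) :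
    x ⬝ᵥ (L ⊗ₖ (1 : Matrix (Fin n) (Fin n) ℝ)).mulVec x
      = ∑ a : Fin n, (fun j => x (j, a)) ⬝ᵥ L.mulVec (fun j => x (j, a)) := by
  simp only [dotProduct, Fintype.sum_prod_type]
  rw [Finset.sum_comm]
  refine Finset.sum_congr rfl fun a _ => Finset.sum_congr rfl fun i _ => ?_
  rw [kron_mulVec]

lemma sandwich {ι κ : Type*} [Fintype ι] [Fintype κ] (W : Matrix ι κ ℝ) (M : Matrix ι ι ℝ)
    (v : κ → ℝ) :
    v ⬝ᵥ (Wᵀ * M * W).mulVec v = (W.mulVec v) ⬝ᵥ M.mulVec (W.mulVec v) := by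
  rw [Matrix.mul_assoc, ← Matrix.mulVec_mulVec, ← Matrix.mulVec_mulVec,
    Matrix.dotProduct_mulVec, Matrix.vecMul_transpose]

end

lemma blockDiagU_mulVec {N n : ℕ} {ν : Fin N → ℕ} (U : ∀ i, Matrix (Fin n) (Fin (ν i)) ℝ)
    (v : ((i : Fin N) × Fin (ν i)) → ℝ) (i : Fin N) (a : Fin n) :
    ((blockDiagU U).mulVec v) (i, a) = (U i).mulVec (fun b => v ⟨i, b⟩) a := by
  simp only [blockDiagU, Matrix.mulVec, dotProduct, Matrix.of_apply]
  rw [← Finset.univ_sigma_univ, Finset.sum_sigma]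
  simp [Finset.sum_ite_eq, ite_mul]

/-- The key positive definiteness lemma. -/
lemma gram_posdef {N n : ℕ} {m ν : Fin N → ℕ}
    (A : Matrix (Fin n) (Fin n) ℝ)
    (C : ∀ i, Matrix (Fin (m i)) (Fin n) ℝ)
    (hobs : ⨅ i, LinearMap.ker (obsMat (C i) A).mulVecLin = ⊥)
    (U : ∀ i, Matrix (Fin n) (Fin (ν i)) ℝ)
    (hUrank : ∀ i, Function.Injective (U i).mulVecLin)
    (hUker : ∀ i, LinearMap.range (U i).mulVecLin = LinearMap.ker (obsMat (C i) A).mulVecLin)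
    (S : Matrix (Fin N) (Fin N) ℝ) (hS : S.PosSemidef)
    (hkerS : LinearMap.ker S.mulVecLin = Submodule.span ℝ {fun _ => (1 : ℝ)}) :
    ((blockDiagU U)ᵀ * (S ⊗ₖ (1 : Matrix (Fin n) (Fin n) ℝ)) * blockDiagU U).PosDef := by
  set W := blockDiagU U with hW
  have hsym : (Wᵀ * (S ⊗ₖ (1 : Matrix (Fin n) (Fin n) ℝ)) * W).IsHermitian := by
    have hS1 : (S ⊗ₖ (1 : Matrix (Fin n) (Fin n) ℝ))ᵀ = S ⊗ₖ (1 : Matrix (Fin n) (Fin n) ℝ) := by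
      ext ⟨i, a⟩ ⟨j, b⟩
      simp only [Matrix.transpose_apply, Matrix.kroneckerMap_apply]
      rw [hS.isHermitian.apply j i |>.symm]
      simp [Matrix.one_apply, eq_comm]
    have : (Wᵀ * (S ⊗ₖ (1 : Matrix (Fin n) (Fin n) ℝ)) * W)ᵀ
        = Wᵀ * (S ⊗ₖ (1 : Matrix (Fin n) (Fin n) ℝ)) * W := by
      rw [Matrix.transpose_mul, Matrix.transpose_mul, hS1, Matrix.transpose_transpose,
        ← Matrix.mul_assoc]
    rw [Matrix.IsHermitian, Matrix.conjTranspose_eq_transpose_of_trivial]; exact this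
  refine Matrix.PosDef.of_dotProduct_mulVec_pos hsym fun v hv => ?_
  have hquad : star v ⬝ᵥ (Wᵀ * (S ⊗ₖ (1 : Matrix (Fin n) (Fin n) ℝ)) * W).mulVec v
      = ∑ a : Fin n, (fun j => (W.mulVec v) (j, a)) ⬝ᵥ S.mulVec (fun j => (W.mulVec v) (j, a)) := by
    rw [star_trivial, sandwich, kron_quad]
  have hterm_nonneg : ∀ a : Fin n,
      0 ≤ (fun j => (W.mulVec v) (j, a)) ⬝ᵥ S.mulVec (fun j => (W.mulVec v) (j, a)) := by
    intro a
    simpa using hS.dotProduct_mulVec_nonneg (fun j => (W.mulVec v) (j, a))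
  rw [hquad]
  have hnonneg : 0 ≤ ∑ a : Fin n,
      (fun j => (W.mulVec v) (j, a)) ⬝ᵥ S.mulVec (fun j => (W.mulVec v) (j, a)) :=
    Finset.sum_nonneg fun a _ => hterm_nonneg a
  rcases eq_or_lt_of_le hnonneg with hzero | hpos
  · exfalso
    have hterms : ∀ a : Fin n,
        (fun j => (W.mulVec v) (j, a)) ⬝ᵥ S.mulVec (fun j => (W.mulVec v) (j, a)) = 0 := by
      intro a
      have := (Finset.sum_eq_zero_iff_of_nonneg (fun a _ => hterm_nonneg a)).mp hzero.symm
      exact this a (Finset.mem_univ a)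
    have hcol : ∀ a : Fin n, ∃ c : ℝ, ∀ j : Fin N, (W.mulVec v) (j, a) = c := by
      intro a
      have h0 : S.mulVec (fun j => (W.mulVec v) (j, a)) = 0 := by
        have := (hS.dotProduct_mulVec_zero_iff (fun j => (W.mulVec v) (j, a))).mp
        rw [star_trivial] at this
        exact this (hterms a)
      have hker : (fun j => (W.mulVec v) (j, a)) ∈ LinearMap.ker S.mulVecLin := by
        rw [LinearMap.mem_ker, Matrix.mulVecLin_apply, h0]
      rw [hkerS, Submodule.mem_span_singleton] at hker
      obtain ⟨c, hc⟩ := hker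
      exact ⟨c, fun j => by have := congrFun hc j; simpa using this.symm⟩
    choose w hw using hcol
    have hwzero : w = 0 := by
      have hmem : w ∈ (⨅ i, LinearMap.ker (obsMat (C i) A).mulVecLin) := by
        rw [Submodule.mem_iInf]
        intro i
        rw [← hUker i]
        refine ⟨fun b => v ⟨i, b⟩, ?_⟩
        funext a
        rw [Matrix.mulVecLin_apply]
        have h1 : (U i).mulVec (fun b => v ⟨i, b⟩) a = (W.mulVec v) (i, a) :=
          (blockDiagU_mulVec U v i a).symm
        rw [h1]
        exact hw a i
      rw [hobs] at hmem
      simpa using hmem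
    have hxzero : ∀ p : Fin N × Fin n, (W.mulVec v) p = 0 := by
      intro p
      rw [hw p.2 p.1, hwzero]
      rfl
    apply hv
    funext q
    have hUi : (U q.1).mulVecLin (fun b => v ⟨q.1, b⟩) = (U q.1).mulVecLin 0 := by
      rw [map_zero]
      funext a
      rw [Matrix.mulVecLin_apply]
      have h1 : (U q.1).mulVec (fun b => v ⟨q.1, b⟩) a = (W.mulVec v) (q.1, a) :=
        (blockDiagU_mulVec U v q.1 a).symm
      rw [h1, hxzero]
      rfl
    have h2 := congrFun (hUrank q.1 hUi) q.2
    simpa using h2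
  · exact hpos


lemma quad_sum {N n : ℕ} {ικ : Type*} [Fintype ικ] (s : Finset ℕ)
    (L : ℕ → Matrix (Fin N) (Fin N) ℝ) (W : Matrix (Fin N × Fin n) ικ ℝ) (v : ικ → ℝ) :
    ∑ r ∈ s, v ⬝ᵥ (Wᵀ * (L r ⊗ₖ (1 : Matrix (Fin n) (Fin n) ℝ)) * W).mulVec v
      = v ⬝ᵥ (Wᵀ * ((∑ r ∈ s, L r) ⊗ₖ (1 : Matrix (Fin n) (Fin n) ℝ)) * W).mulVec v := by
  classical
  induction s using Finset.induction with
  | empty => simp [Matrix.zero_kronecker]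
  | insert _ _ h ih =>
    rw [Finset.sum_insert h, Finset.sum_insert h, ih, Matrix.add_kronecker,
      Matrix.mul_add, Matrix.add_mul, Matrix.add_mulVec, dotProduct_add]

set_option maxHeartbeats 2000000 in
/-- Uniform complete observability of the system `η̇ = 0, ȳ = (L_{σ(t)}^{1/2} ⊗ I_n) U η`:
under joint connectivity and collective observability, the observability Gramian
`∫_{t*}^{t*+T_o} Uᵀ (L_{σ(t)} ⊗ I_n) U dt` with `T_o = 2 T_c` is bounded below and above by
`α₁ I` and `α₂ I` (as quadratic forms), uniformly in `t* ≥ 0`. -/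
theorem uco_gramian_bounds
    {N n n₀ : ℕ} {m ν : Fin N → ℕ}
    (A : Matrix (Fin n) (Fin n) ℝ)
    (C : ∀ i, Matrix (Fin (m i)) (Fin n) ℝ)
    (hobs : ⨅ i, LinearMap.ker (obsMat (C i) A).mulVecLin = ⊥)
    (U : ∀ i, Matrix (Fin n) (Fin (ν i)) ℝ)
    (hUrank : ∀ i, Function.Injective (U i).mulVecLin)
    (hUker : ∀ i, LinearMap.range (U i).mulVecLin = LinearMap.ker (obsMat (C i) A).mulVecLin)
    (Lap : Fin n₀ → Matrix (Fin N) (Fin N) ℝ)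
    (hLap : ∀ p, (Lap p).PosSemidef)
    (σ : ℝ → Fin n₀)
    (τ Tc : ℝ) (hτ : 0 < τ) (hτTc : τ ≤ Tc)
    (tj : ℕ → ℝ) (htj0 : tj 0 = 0)
    (hdwell : ∀ j, τ ≤ tj (j + 1) - tj j)
    (hσconst : ∀ j t, tj j ≤ t → t < tj (j + 1) → σ t = σ (tj j))
    (jk : ℕ → ℕ) (hjk0 : jk 0 = 0) (hjkmono : StrictMono jk)
    (hjkgap : ∀ k, τ ≤ tj (jk (k + 1)) - tj (jk k) ∧ tj (jk (k + 1)) - tj (jk k) ≤ Tc)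
    (hconn : ∀ k, LinearMap.ker
        (∑ r ∈ Finset.Ico (jk k) (jk (k + 1)), Lap (σ (tj r))).mulVecLin
        = Submodule.span ℝ {fun _ => (1 : ℝ)}) :
    ∃ α₁ α₂ : ℝ, 0 < α₁ ∧ α₁ ≤ α₂ ∧
      ∀ tstar : ℝ, 0 ≤ tstar → ∀ v : ((i : Fin N) × Fin (ν i)) → ℝ,
        α₁ * (∑ q, v q ^ 2) ≤
          (∫ t in tstar..(tstar + 2 * Tc),
            v ⬝ᵥ ((blockDiagU U)ᵀ * (Lap (σ t) ⊗ₖ (1 : Matrix (Fin n) (Fin n) ℝ)) *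
              blockDiagU U).mulVec v) ∧
        (∫ t in tstar..(tstar + 2 * Tc),
            v ⬝ᵥ ((blockDiagU U)ᵀ * (Lap (σ t) ⊗ₖ (1 : Matrix (Fin n) (Fin n) ℝ)) *
              blockDiagU U).mulVec v) ≤ α₂ * (∑ q, v q ^ 2) := by
  classical
  set W := blockDiagU U with hW
  set G : Fin n₀ → Matrix ((i : Fin N) × Fin (ν i)) ((i : Fin N) × Fin (ν i)) ℝ :=
    fun p => Wᵀ * (Lap p ⊗ₖ (1 : Matrix (Fin n) (Fin n) ℝ)) * W with hG
  -- basic facts about tj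
  have htjmono : StrictMono tj := by
    apply strictMono_nat_of_lt_succ
    intro j
    have := hdwell j
    linarith
  have htjnonneg : ∀ j, 0 ≤ tj j := by
    intro j
    rw [← htj0]
    exact htjmono.monotone (Nat.zero_le j)
  have htjk_ge : ∀ k : ℕ, (k : ℝ) * τ ≤ tj (jk k) := by
    intro k
    induction k with
    | zero => simp [hjk0, htj0]
    | succ k ih =>
      have := (hjkgap k).1
      push_cast
      linarith
  -- measurability of the switching sets
  have hcover : ∀ t : ℝ, 0 ≤ t → ∃ j, tj j ≤ t ∧ t < tj (j + 1) := by
    intro t ht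
    have hex : ∃ j : ℕ, t < tj j := by
      obtain ⟨j, hj⟩ := exists_nat_gt (t / τ)
      refine ⟨jk j, lt_of_lt_of_le ?_ (htjk_ge j)⟩
      rw [div_lt_iff₀ hτ] at hj
      linarith
    have hj0 : t < tj (Nat.find hex) := Nat.find_spec hex
    have hj0ne : Nat.find hex ≠ 0 := by
      intro h
      rw [h, htj0] at hj0
      linarith
    obtain ⟨j, hjeq⟩ := Nat.exists_eq_succ_of_ne_zero hj0ne
    refine ⟨j, ?_, by rw [← Nat.succ_eq_add_one, ← hjeq]; exact hj0⟩
    by_contra h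
    push_neg at h
    exact absurd (Nat.find_min hex (by omega) h) (by simp)
  have hA : ∀ p : Fin n₀, MeasurableSet {t : ℝ | 0 ≤ t ∧ σ t = p} := by
    intro p
    have heq : {t : ℝ | 0 ≤ t ∧ σ t = p}
        = ⋃ j : ℕ, (if σ (tj j) = p then Set.Ico (tj j) (tj (j + 1)) else ∅) := by
      ext t
      simp only [Set.mem_setOf_eq, Set.mem_iUnion]
      constructor
      · rintro ⟨ht, hσt⟩
        obtain ⟨j, hj1, hj2⟩ := hcover t ht
        refine ⟨j, ?_⟩
        rw [hσconst j t hj1 hj2] at hσt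
        rw [if_pos hσt]
        exact ⟨hj1, hj2⟩
      · rintro ⟨j, hj⟩
        by_cases hc : σ (tj j) = p
        · rw [if_pos hc] at hj
          obtain ⟨hj1, hj2⟩ := hj
          exact ⟨le_trans (htjnonneg j) hj1, by rw [hσconst j t hj1 hj2, hc]⟩
        · rw [if_neg hc] at hj
          exact absurd hj (Set.notMem_empty t)
    rw [heq]
    exact MeasurableSet.iUnion fun j => by
      split <;> [exact measurableSet_Ico; exact MeasurableSet.empty]
  -- constants
  set M₀ : ℕ := Nat.floor (Tc / τ) with hM₀
  set Gc : (Fin n₀ → Fin (M₀ + 1)) → Matrix ((i : Fin N) × Fin (ν i)) ((i : Fin N) × Fin (ν i)) ℝ :=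
    fun c => Wᵀ * ((∑ p, (c p : ℕ) • Lap p) ⊗ₖ (1 : Matrix (Fin n) (Fin n) ℝ)) * W with hGc
  set cst : (Fin n₀ → Fin (M₀ + 1)) → ℝ :=
    fun c => if h : (Gc c).PosDef then (posdef_lower h).choose else 1 with hcst
  have hcstpos : ∀ c, 0 < cst c := by
    intro c
    by_cases h : (Gc c).PosDef
    · have := (posdef_lower h).choose_spec.1
      simpa [hcst, dif_pos h] using this
    · simp [hcst, dif_neg h]
  have hcstspec : ∀ c, (Gc c).PosDef →
      ∀ u : ((i : Fin N) × Fin (ν i)) → ℝ, cst c * ∑ q, u q ^ 2 ≤ u ⬝ᵥ (Gc c).mulVec u := by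
    intro c hc u
    have := (posdef_lower hc).choose_spec.2 u
    simpa [hcst, dif_pos hc] using this
  have hne : (Finset.univ : Finset (Fin n₀ → Fin (M₀ + 1))).Nonempty := Finset.univ_nonempty
  set αmin : ℝ := Finset.univ.inf' hne cst with hαmin
  have hαminpos : 0 < αmin := by
    rw [hαmin, Finset.lt_inf'_iff]
    exact fun c _ => hcstpos c
  have hαminle : ∀ c, αmin ≤ cst c := fun c => Finset.inf'_le _ (Finset.mem_univ c)
  set B : ℝ := ∑ p, (∑ q, ∑ r, |G p q r|) with hB
  have hBnonneg : 0 ≤ B :=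
    Finset.sum_nonneg fun p _ => Finset.sum_nonneg fun q _ => Finset.sum_nonneg fun r _ =>
      abs_nonneg _
  refine ⟨τ * αmin, max (τ * αmin) (2 * Tc * B), by positivity, le_max_left _ _, ?_⟩
  intro tstar hts v
  set Q : Fin n₀ → ℝ := fun p => v ⬝ᵥ (G p).mulVec v with hQ
  have hQnonneg : ∀ p, 0 ≤ Q p := by
    intro p
    rw [hQ]
    simp only [hG]
    rw [sandwich, kron_quad]
    exact Finset.sum_nonneg fun a _ => by simpa using (hLap p).dotProduct_mulVec_nonneg _
  have hQle : ∀ p, Q p ≤ B * ∑ q, v q ^ 2 := by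
    intro p
    refine (quad_upper (G p) v).trans ?_
    apply mul_le_mul_of_nonneg_right _ (Finset.sum_nonneg fun q _ => sq_nonneg _)
    rw [hB]
    exact Finset.single_le_sum (f := fun p' => ∑ q, ∑ r, |G p' q r|)
      (fun p' _ => Finset.sum_nonneg fun q _ => Finset.sum_nonneg fun r _ => abs_nonneg _)
      (Finset.mem_univ p)
  set f : ℝ → ℝ := fun t => Q (σ t) with hf
  have hfbound : ∀ t, |f t| ≤ ∑ p, |Q p| :=
    fun t => Finset.single_le_sum (f := fun p => |Q p|) (fun p _ => abs_nonneg _)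
      (Finset.mem_univ (σ t))
  -- integrability
  have hInt : ∀ a b : ℝ, 0 ≤ a → a ≤ b → IntervalIntegrable f volume a b := by
    intro a b ha hab
    set g : ℝ → ℝ := fun t => ∑ p, Set.indicator {t : ℝ | 0 ≤ t ∧ σ t = p} (fun _ => Q p) t
      with hg
    have hgmeas : Measurable g :=
      Finset.measurable_sum _ fun p _ => Measurable.indicator measurable_const (hA p)
    have hgbound : ∀ t, ‖g t‖ ≤ ∑ p, |Q p| := by
      intro t
      rw [hg]
      simp only [Real.norm_eq_abs]
      refine (Finset.abs_sum_le_sum_abs _ _).trans (Finset.sum_le_sum fun p _ => ?_)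
      by_cases hmem : t ∈ {t : ℝ | 0 ≤ t ∧ σ t = p}
      · rw [Set.indicator_of_mem hmem]
      · rw [Set.indicator_of_notMem hmem]; simp
    have hgf : Set.EqOn g f (Set.Ioc a b) := by
      intro t ht
      have ht0 : 0 ≤ t := le_trans ha ht.1.le
      simp only [hg, hf]
      rw [Finset.sum_eq_single (σ t)]
      · exact Set.indicator_of_mem (show t ∈ {t : ℝ | 0 ≤ t ∧ σ t = σ t} from ⟨ht0, rfl⟩)
          (fun _ => Q (σ t))
      · intro p _ hp
        rw [Set.indicator_of_notMem]
        intro hmem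
        exact hp hmem.2.symm
      · simp
    have hgInt : IntegrableOn g (Set.Ioc a b) volume :=
      Measure.integrableOn_of_bounded (M := ∑ p, |Q p|) measure_Ioc_lt_top.ne
        hgmeas.aestronglyMeasurable
        (Filter.Eventually.of_forall fun t => hgbound t)
    refine ⟨(hgInt.congr_fun hgf measurableSet_Ioc), ?_⟩
    rw [Set.Ioc_eq_empty (not_lt.mpr hab)]
    exact integrableOn_empty
  -- integral over a dwell interval
  have hpiece : ∀ r : ℕ, ∫ t in (tj r)..(tj (r + 1)), f t = (tj (r + 1) - tj r) * Q (σ (tj r)) := by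
    intro r
    have hle : tj r ≤ tj (r + 1) := (htjmono (Nat.lt_succ_self r)).le
    rw [intervalIntegral.integral_of_le hle]
    have hae : ∀ᵐ t ∂(volume : MeasureTheory.Measure ℝ),
        t ∈ Set.Ioc (tj r) (tj (r + 1)) → f t = Q (σ (tj r)) := by
      have hne' : ∀ᵐ t : ℝ, t ≠ tj (r + 1) := by
        rw [MeasureTheory.ae_iff]
        convert Real.volume_singleton (a := tj (r + 1)) using 2
        ext t
        simp
      filter_upwards [hne'] with t htne ht
      simp only [hf]
      rw [hσconst r t ht.1.le (lt_of_le_of_ne ht.2 htne)]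
    rw [MeasureTheory.setIntegral_congr_ae measurableSet_Ioc hae]
    rw [MeasureTheory.setIntegral_const, Real.volume_real_Ioc_of_le hle]
    simp [smul_eq_mul]
  -- locate a full connectivity window inside [tstar, tstar + 2*Tc]
  have hex : ∃ k : ℕ, tstar < tj (jk k) := by
    obtain ⟨k, hk⟩ := exists_nat_gt (tstar / τ)
    rw [div_lt_iff₀ hτ] at hk
    exact ⟨k, lt_of_lt_of_le hk (htjk_ge k)⟩
  have hk0ne : Nat.find hex ≠ 0 := by
    intro h
    have h2 := Nat.find_spec hex
    rw [h, hjk0, htj0] at h2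
    linarith
  obtain ⟨K', hK'eq⟩ := Nat.exists_eq_succ_of_ne_zero hk0ne
  have hprev : tj (jk K') ≤ tstar := by
    by_contra h
    push_neg at h
    exact Nat.find_min hex (by omega) h
  have ha1 : tstar < tj (jk (K' + 1)) := by
    have := Nat.find_spec hex
    rwa [hK'eq] at this
  have ha2 : tj (jk (K' + 1)) ≤ tstar + Tc := by
    have := (hjkgap K').2
    linarith
  have hb2 : tj (jk (K' + 2)) ≤ tstar + 2 * Tc := by
    have := (hjkgap (K' + 1)).2
    linarith
  have hab : tj (jk (K' + 1)) ≤ tj (jk (K' + 2)) :=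
    (htjmono.monotone (hjkmono.monotone (by omega)))
  have ht2 : tstar ≤ tstar + 2 * Tc := by linarith
  -- splitting the integral
  have hI1 : IntervalIntegrable f volume tstar (tj (jk (K' + 1))) := hInt _ _ hts ha1.le
  have hI2 : IntervalIntegrable f volume (tj (jk (K' + 1))) (tj (jk (K' + 2))) :=
    hInt _ _ (htjnonneg _) hab
  have hI3 : IntervalIntegrable f volume (tj (jk (K' + 2))) (tstar + 2 * Tc) :=
    hInt _ _ (htjnonneg _) hb2
  have hsplit : ∫ t in tstar..(tstar + 2 * Tc), f t
      = (∫ t in tstar..(tj (jk (K' + 1))), f t)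
        + ((∫ t in (tj (jk (K' + 1)))..(tj (jk (K' + 2))), f t)
          + ∫ t in (tj (jk (K' + 2)))..(tstar + 2 * Tc), f t) := by
    rw [intervalIntegral.integral_add_adjacent_intervals hI2 hI3,
      intervalIntegral.integral_add_adjacent_intervals hI1 (hI2.trans hI3)]
  have hnn1 : 0 ≤ ∫ t in tstar..(tj (jk (K' + 1))), f t :=
    intervalIntegral.integral_nonneg ha1.le (fun u _ => hQnonneg (σ u))
  have hnn3 : 0 ≤ ∫ t in (tj (jk (K' + 2)))..(tstar + 2 * Tc), f t :=
    intervalIntegral.integral_nonneg hb2 (fun u _ => hQnonneg (σ u))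
  -- the middle integral as a sum over dwell intervals
  have hjkle : jk (K' + 1) ≤ jk (K' + 2) := (hjkmono (by omega)).le
  have hmid : ∫ t in (tj (jk (K' + 1)))..(tj (jk (K' + 2))), f t
      = ∑ r ∈ Finset.Ico (jk (K' + 1)) (jk (K' + 2)), (tj (r + 1) - tj r) * Q (σ (tj r)) := by
    rw [← intervalIntegral.sum_integral_adjacent_intervals_Ico hjkle
      (fun r _ => hInt (tj r) (tj (r + 1)) (htjnonneg r) (htjmono (Nat.lt_succ_self r)).le)]
    exact Finset.sum_congr rfl fun r _ => hpiece r
  -- identify the sum with the quadratic form of the window Gramian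
  set I : Finset ℕ := Finset.Ico (jk (K' + 1)) (jk (K' + 2)) with hI
  -- cardinality bound
  have hcard : (I.card : ℝ) * τ ≤ Tc := by
    have htel : ∑ r ∈ I, (tj (r + 1) - tj r) = tj (jk (K' + 2)) - tj (jk (K' + 1)) := by
      rw [hI, Finset.sum_Ico_eq_sub _ hjkle, Finset.sum_range_sub (f := tj),
        Finset.sum_range_sub (f := tj)]
      ring
    have hsum : ∑ r ∈ I, τ ≤ ∑ r ∈ I, (tj (r + 1) - tj r) :=
      Finset.sum_le_sum fun r _ => hdwell r
    rw [Finset.sum_const, nsmul_eq_mul] at hsum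
    have := (hjkgap (K' + 1)).2
    rw [htel] at hsum
    linarith
  have hcardM : I.card ≤ M₀ := by
    rw [hM₀]
    apply Nat.le_floor
    rw [le_div_iff₀ hτ]
    exact hcard
  set cnt : Fin n₀ → ℕ := fun p => (I.filter (fun r => σ (tj r) = p)).card with hcnt
  have hcnt_le : ∀ p, cnt p < M₀ + 1 := fun p =>
    Nat.lt_succ_of_le (le_trans (Finset.card_filter_le _ _) hcardM)
  set c : Fin n₀ → Fin (M₀ + 1) := fun p => ⟨cnt p, hcnt_le p⟩ with hc
  have hSdecomp : ∑ p, ((c p : ℕ)) • Lap p = ∑ r ∈ I, Lap (σ (tj r)) := by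
    rw [← Finset.sum_fiberwise' I (fun r => σ (tj r)) Lap]
    exact Finset.sum_congr rfl fun p _ => by rw [Finset.sum_const]
  have hSpsd : (∑ r ∈ I, Lap (σ (tj r))).PosSemidef := by
    refine Finset.sum_induction _ _ (fun a b ha hb => ha.add hb) ?_ (fun r _ => hLap _)
    exact ⟨by simp [Matrix.IsHermitian], fun x => by simp⟩
  have hGcPD : (Gc c).PosDef := by
    have h1 : Gc c = Wᵀ * ((∑ r ∈ I, Lap (σ (tj r))) ⊗ₖ (1 : Matrix (Fin n) (Fin n) ℝ)) * W := by
      rw [hGc]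
      simp only []
      rw [hSdecomp]
    rw [h1, hW]
    exact gram_posdef A C hobs U hUrank hUker _ hSpsd (hconn (K' + 1))
  have hQsum : ∑ r ∈ I, Q (σ (tj r)) = v ⬝ᵥ (Gc c).mulVec v := by
    have h2 : ∑ r ∈ I, Q (σ (tj r))
        = v ⬝ᵥ (Wᵀ * ((∑ r ∈ I, Lap (σ (tj r))) ⊗ₖ (1 : Matrix (Fin n) (Fin n) ℝ)) * W).mulVec v :=
      quad_sum I (fun r => Lap (σ (tj r))) W v
    rw [h2]
    congr 2
    rw [hGc]
    simp only []
    rw [hSdecomp]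
  -- lower bound chain
  have hlow1 : τ * αmin * ∑ q, v q ^ 2 ≤ τ * ∑ r ∈ I, Q (σ (tj r)) := by
    have h3 : αmin * ∑ q, v q ^ 2 ≤ cst c * ∑ q, v q ^ 2 :=
      mul_le_mul_of_nonneg_right (hαminle c) (Finset.sum_nonneg fun q _ => sq_nonneg _)
    have h4 := hcstspec c hGcPD v
    rw [← hQsum] at h4
    rw [mul_assoc]
    exact mul_le_mul_of_nonneg_left (h3.trans h4) hτ.le
  have hlow2 : τ * ∑ r ∈ I, Q (σ (tj r)) ≤ ∑ r ∈ I, (tj (r + 1) - tj r) * Q (σ (tj r)) := by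
    rw [Finset.mul_sum]
    exact Finset.sum_le_sum fun r _ =>
      mul_le_mul_of_nonneg_right (hdwell r) (hQnonneg _)
  have hlower : τ * αmin * ∑ q, v q ^ 2 ≤ ∫ t in tstar..(tstar + 2 * Tc), f t := by
    rw [hsplit, ← hmid] at *
    have := hlow1.trans hlow2
    rw [hmid] at this ⊢
    linarith [hnn1, hnn3, this]
  -- upper bound
  have hupper : ∫ t in tstar..(tstar + 2 * Tc), f t
      ≤ max (τ * αmin) (2 * Tc * B) * ∑ q, v q ^ 2 := by
    have h5 : ∫ t in tstar..(tstar + 2 * Tc), f t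
        ≤ ∫ _ in tstar..(tstar + 2 * Tc), (B * ∑ q, v q ^ 2) :=
      intervalIntegral.integral_mono_on ht2 (hInt _ _ hts ht2) intervalIntegrable_const
        (fun t _ => hQle (σ t))
    rw [intervalIntegral.integral_const, smul_eq_mul] at h5
    refine h5.trans ?_
    have h6 : (2 * Tc * B) * ∑ q, v q ^ 2 ≤ max (τ * αmin) (2 * Tc * B) * ∑ q, v q ^ 2 :=
      mul_le_mul_of_nonneg_right (le_max_right _ _) (Finset.sum_nonneg fun q _ => sq_nonneg _)
    refine le_trans (le_of_eq ?_) h6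
    ring
  exact ⟨hlower, hupper⟩
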